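/- Let p ∈ Δ(Y) with p(y_1) > p(y_i) for all i ≥ 2. With ∇_i = p(y_1) - p(y_i) and Δ_i² = -ln(1 - (√p(y_1) - √p(y_i))²), the following two-sided bound holds: (p(y_1)/(-ln(1 - p(y_1)))) · p(y_1) ∇_i^{-2} ≤ Δ_i^{-2} ≤ 4 p(y_1) ∇_i^{-2}. -/

import Mathlib

open Real

set_option maxHeartbeats 1000000

theorem delta_nabla_comparison {Y : Type*} [Fintype Y] (p : Y → ℝ)
    (hp0 : ∀ y, 0 ≤ p y) (hp1 : ∑ y, p y = 1)
    (y1 yi : Y) (hi1 : p yi < p y1) (h1lt : p y1 < 1) :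
    let nab := p y1 - p yi
    let Dsq := -Real.log (1 - (Real.sqrt (p y1) - Real.sqrt (p yi)) ^ 2)
    (p y1 / (-Real.log (1 - p y1))) * p y1 / nab ^ 2 ≤ Dsq⁻¹ ∧
      Dsq⁻¹ ≤ 4 * p y1 / nab ^ 2 := by
  intro nab Dsq
  set a := p y1 with ha_def
  set b := p yi with hb_def
  have hb0 : 0 ≤ b := hp0 yi
  have ha0 : 0 < a := lt_of_le_of_lt hb0 hi1
  have hsa : Real.sqrt a ^ 2 = a := Real.sq_sqrt ha0.le
  have hsb : Real.sqrt b ^ 2 = b := Real.sq_sqrt hb0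
  have hsblt : Real.sqrt b < Real.sqrt a := Real.sqrt_lt_sqrt hb0 hi1
  have hsbnn : 0 ≤ Real.sqrt b := Real.sqrt_nonneg b
  set s := (Real.sqrt a - Real.sqrt b) ^ 2 with hs_def
  have hs0 : 0 < s := pow_pos (sub_pos.2 hsblt) 2
  have hnabd : nab = a - b := rfl
  have hnab : 0 < nab := by rw [hnabd]; linarith
  have hsle : s ≤ nab := by rw [hnabd, hs_def]; nlinarith [hsbnn, hsblt.le]
  have hs1 : s < 1 := by rw [hnabd] at hsle; linarith
  have h1s : 0 < 1 - s := by linarith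
  have hDd : Dsq = -Real.log (1 - s) := rfl
  have hDpos : 0 < Dsq := by
    have : Real.log (1 - s) < 0 := Real.log_neg h1s (by linarith)
    rw [hDd]; linarith
  have hDge : s ≤ Dsq := by
    have := Real.log_le_sub_one_of_pos h1s
    rw [hDd]; linarith
  have hnabsq : nab ^ 2 = s * (Real.sqrt a + Real.sqrt b) ^ 2 := by
    rw [hnabd, hs_def]; nlinarith [hsa, hsb]
  have hL : 0 < -Real.log (1 - a) := by
    have : Real.log (1 - a) < 0 := Real.log_neg (by linarith) (by linarith)
    linarith
  constructor
  · -- lower bound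
    have hconc := strictConcaveOn_log_Ioi.concaveOn.2
      (Set.mem_Ioi.2 (show (0:ℝ) < 1 by norm_num))
      (Set.mem_Ioi.2 (show (0:ℝ) < 1 - a by linarith))
      (show (0:ℝ) ≤ 1 - s / a by
        rw [sub_nonneg, div_le_one ha0]
        calc s ≤ nab := hsle
        _ ≤ a := by rw [hnabd]; linarith)
      (show (0:ℝ) ≤ s / a from div_nonneg hs0.le ha0.le)
      (by ring)
    have hpt : (1 - s / a) • (1:ℝ) + (s / a) • (1 - a) = 1 - s := by
      simp only [smul_eq_mul]; linear_combination (-s) * mul_inv_cancel₀ ha0.ne'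
    rw [hpt, smul_eq_mul, smul_eq_mul, Real.log_one, mul_zero, zero_add] at hconc
    -- hconc : s/a * log (1-a) ≤ log (1 - s)
    rw [div_mul_eq_mul_div, div_le_iff₀ ha0] at hconc
    have key : a * Dsq ≤ s * (-Real.log (1 - a)) := by
      rw [hDd]; nlinarith [hconc]
    have has : a * s ≤ nab ^ 2 := by
      rw [hnabsq]
      have h1 : a ≤ (Real.sqrt a + Real.sqrt b) ^ 2 := by nlinarith [hsa, hsbnn, Real.sqrt_nonneg a]
      calc a * s = s * a := by ring
        _ ≤ s * (Real.sqrt a + Real.sqrt b) ^ 2 := mul_le_mul_of_nonneg_left h1 hs0.le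
    have main : a * a * Dsq ≤ (-Real.log (1 - a)) * nab ^ 2 := by
      calc a * a * Dsq = a * (a * Dsq) := by ring
        _ ≤ a * (s * (-Real.log (1 - a))) := mul_le_mul_of_nonneg_left key ha0.le
        _ = (-Real.log (1 - a)) * (a * s) := by ring
        _ ≤ (-Real.log (1 - a)) * nab ^ 2 := mul_le_mul_of_nonneg_left has hL.le
    have hrw : a / (-Real.log (1 - a)) * a / nab ^ 2
        = (a * a) / ((-Real.log (1 - a)) * nab ^ 2) := by
      field_simp
    rw [hrw, inv_eq_one_div,
      div_le_div_iff₀ (mul_pos hL (pow_pos hnab 2)) hDpos]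
    linarith [main]
  · rw [inv_eq_one_div, div_le_div_iff₀ hDpos (pow_pos hnab 2)]
    have h4a : (Real.sqrt a + Real.sqrt b) ^ 2 ≤ 4 * a := by
      nlinarith [hsa, hsb, hsblt.le, hsbnn]
    calc 1 * nab ^ 2 = s * (Real.sqrt a + Real.sqrt b) ^ 2 := by rw [one_mul, hnabsq]
      _ ≤ s * (4 * a) := mul_le_mul_of_nonneg_left h4a hs0.le
      _ ≤ Dsq * (4 * a) := mul_le_mul_of_nonneg_right hDge (by linarith)
      _ = 4 * a * Dsq := by ring
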